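/- In the cycle gadget instance, the fractional vector x̄ with x̄_C = k/(k²−1) for every full component C with |R_C| = k and x̄_C = 0 otherwise is feasible for SER, satisfies Σ_C (|R_C|−1) x̄_C = k = |R|−1, and has objective value Σ_C |R_C| x̄_C = (k³+k²)/(k²−1). -/

import Mathlib

open Finset

/-- The full components of the cycle gadget on `k+1` terminals: every subset of
terminals of cardinality between `2` and `k` spans exactly one (cheapest) full
component, of cost equal to its number of terminals. -/
abbrev GadgetComp (k : ℕ) := {A : Finset (Fin (k + 1)) // 2 ≤ A.card ∧ A.card ≤ k}

/-- SER feasibility for the cycle gadget: variable bounds, the spanning constraint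
`Σ (|R_C| − 1) x_C = |R| − 1 = k`, and the subtour elimination constraints. -/
def GadgetSERFeasible (k : ℕ) (x : GadgetComp k → ℝ) : Prop :=
  (∀ A, 0 ≤ x A ∧ x A ≤ 1) ∧
  (∑ A : GadgetComp k, ((A.1.card : ℝ) - 1) * x A = k) ∧
  ∀ R' : Finset (Fin (k + 1)), 2 ≤ R'.card →
    ∑ A ∈ Finset.univ.filter (fun A : GadgetComp k => (R' ∩ A.1).Nonempty),
        (((R' ∩ A.1).card : ℝ) - 1) * x A ≤ (R'.card : ℝ) - 1

/-- SER objective for the cycle gadget: each component `C` costs `|R_C|`. -/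
def GadgetObj (k : ℕ) (x : GadgetComp k → ℝ) : ℝ :=
  ∑ A : GadgetComp k, (A.1.card : ℝ) * x A

/-- The additional clique constraints: any family of components pairwise sharing at
least two terminals has total weight at most `1`. -/
def GadgetCliqueFeasible (k : ℕ) (x : GadgetComp k → ℝ) : Prop :=
  ∀ F : Finset (GadgetComp k),
    (∀ A ∈ F, ∀ B ∈ F, A ≠ B → 2 ≤ (A.1 ∩ B.1).card) → ∑ A ∈ F, x A ≤ 1

open Classical in
/-- The fractional solution of the cycle gadget: weight `k/(k²−1)` on each of the
`k+1` components with exactly `k` terminals, `0` otherwise. -/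
noncomputable def gadgetXbar (k : ℕ) : GadgetComp k → ℝ :=
  fun A => if A.1.card = k then (k : ℝ) / ((k : ℝ) ^ 2 - 1) else 0

/-- Summing a function supported on the components with exactly `k` terminals
reduces to a sum over the omitted terminal. -/
lemma gadget_sum_eq (k : ℕ) (hk : 2 ≤ k) (g : Finset (Fin (k + 1)) → ℝ) :
    ∑ A : GadgetComp k, (if A.1.card = k then g A.1 else 0)
      = ∑ i : Fin (k + 1), g ((univ : Finset (Fin (k + 1))).erase i) := by
  classical
  have h1 : ∑ A : GadgetComp k, (if A.1.card = k then g A.1 else 0)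
      = ∑ A ∈ (univ : Finset (Finset (Fin (k + 1)))).filter
          (fun A => 2 ≤ A.card ∧ A.card ≤ k), (if A.card = k then g A else 0) := by
    exact (Finset.sum_subtype (p := fun A => 2 ≤ A.card ∧ A.card ≤ k)
      ((univ : Finset (Finset (Fin (k + 1)))).filter (fun A => 2 ≤ A.card ∧ A.card ≤ k))
      (fun A => by simp) (fun A => if A.card = k then g A else 0)).symm
  rw [h1, ← Finset.sum_filter]
  refine (Finset.sum_bij (fun (i : Fin (k+1)) (_ : i ∈ univ) =>
      (univ : Finset (Fin (k + 1))).erase i) ?_ ?_ ?_ ?_).symm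
  · intro i _
    simp only [mem_filter, mem_univ, true_and]
    have hc : ((univ : Finset (Fin (k + 1))).erase i).card = k := by
      rw [Finset.card_erase_of_mem (mem_univ i)]
      simp
    exact ⟨⟨hk.trans hc.ge, hc.le⟩, hc⟩
  · intro i _ j _ h
    by_contra hne
    have : j ∈ (univ : Finset (Fin (k + 1))).erase j := by
      have h' : (univ : Finset (Fin (k + 1))).erase i = univ.erase j := h
      rw [← h']; exact mem_erase.mpr ⟨Ne.symm hne, mem_univ j⟩
    exact (Finset.notMem_erase j _) this
  · intro A hA
    simp only [mem_filter, mem_univ, true_and] at hA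
    have hcompl : Aᶜ.card = 1 := by
      have := Finset.card_compl A
      rw [hA.2] at this
      simp at this; omega
    obtain ⟨i, hi⟩ := Finset.card_eq_one.mp hcompl
    refine ⟨i, mem_univ i, ?_⟩
    have : A = Aᶜᶜ := by simp
    rw [this, hi]
    ext x; simp [mem_erase, eq_comm]
  · intro i _; rfl

/-- In the cycle gadget instance the fractional vector `x̄` with
`x̄_C = k/(k²−1)` for `|R_C| = k` and `0` otherwise is feasible for SER, satisfies
the spanning constraint `Σ (|R_C|−1) x̄_C = k = |R|−1`, and has objective value
`(k³+k²)/(k²−1)`. -/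
theorem gadget_xbar_feasible (k : ℕ) (hk : 2 ≤ k) :
    GadgetSERFeasible k (gadgetXbar k) ∧
    (∑ A : GadgetComp k, ((A.1.card : ℝ) - 1) * gadgetXbar k A = k) ∧
    GadgetObj k (gadgetXbar k) = ((k : ℝ) ^ 3 + (k : ℝ) ^ 2) / ((k : ℝ) ^ 2 - 1) := by
  classical
  have hk2 : (2 : ℝ) ≤ (k : ℝ) := by exact_mod_cast hk
  have hpos : (0 : ℝ) < (k : ℝ) ^ 2 - 1 := by nlinarith
  set w : ℝ := (k : ℝ) / ((k : ℝ) ^ 2 - 1) with hw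
  have hw0 : 0 ≤ w := div_nonneg (by positivity) hpos.le
  have hw1 : w ≤ 1 := by rw [hw, div_le_one hpos]; nlinarith
  have hxbar : ∀ A : GadgetComp k, gadgetXbar k A = if A.1.card = k then w else 0 :=
    fun A => rfl
  have hce : ∀ i : Fin (k+1), (((univ : Finset (Fin (k+1))).erase i).card : ℝ) = k := by
    intro i; rw [Finset.card_erase_of_mem (mem_univ i)]; simp
  -- the spanning constraint
  have hspan : ∑ A : GadgetComp k, ((A.1.card : ℝ) - 1) * gadgetXbar k A = k := by
    have hterm : ∀ A : GadgetComp k, ((A.1.card : ℝ) - 1) * gadgetXbar k A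
        = if A.1.card = k then ((A.1.card : ℝ) - 1) * w else 0 := by
      intro A; rw [hxbar]; split <;> simp
    rw [Finset.sum_congr rfl (fun A _ => hterm A),
      gadget_sum_eq k hk (fun B => ((B.card : ℝ) - 1) * w)]
    simp only [hce]
    rw [Finset.sum_const, Finset.card_univ]
    simp only [Fintype.card_fin, nsmul_eq_mul]
    rw [hw]
    push_cast
    field_simp
    ring
  -- the objective value
  have hobj : GadgetObj k (gadgetXbar k)
      = ((k : ℝ) ^ 3 + (k : ℝ) ^ 2) / ((k : ℝ) ^ 2 - 1) := by
    unfold GadgetObj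
    have hterm : ∀ A : GadgetComp k, (A.1.card : ℝ) * gadgetXbar k A
        = if A.1.card = k then (A.1.card : ℝ) * w else 0 := by
      intro A; rw [hxbar]; split <;> simp
    rw [Finset.sum_congr rfl (fun A _ => hterm A),
      gadget_sum_eq k hk (fun B => (B.card : ℝ) * w)]
    simp only [hce]
    rw [Finset.sum_const, Finset.card_univ]
    simp only [Fintype.card_fin, nsmul_eq_mul]
    rw [hw]
    push_cast
    field_simp
  -- the subtour elimination constraints
  have hsub : ∀ R' : Finset (Fin (k + 1)), 2 ≤ R'.card →
      ∑ A ∈ Finset.univ.filter (fun A : GadgetComp k => (R' ∩ A.1).Nonempty),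
        (((R' ∩ A.1).card : ℝ) - 1) * gadgetXbar k A ≤ (R'.card : ℝ) - 1 := by
    intro R' hR'
    have hrle : R'.card ≤ k + 1 := by
      have := Finset.card_le_card (Finset.subset_univ R')
      simpa using this
    set r : ℝ := (R'.card : ℝ) with hrdef
    have hr2 : (2 : ℝ) ≤ r := by rw [hrdef]; exact_mod_cast hR'
    have hrk : r ≤ (k : ℝ) + 1 := by rw [hrdef]; exact_mod_cast hrle
    have hfull : ∑ A ∈ Finset.univ.filter (fun A : GadgetComp k => (R' ∩ A.1).Nonempty),
        (((R' ∩ A.1).card : ℝ) - 1) * gadgetXbar k A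
        = ∑ A : GadgetComp k, (((R' ∩ A.1).card : ℝ) - 1) * gadgetXbar k A := by
      apply Finset.sum_filter_of_ne
      intro A _ hne
      by_contra hempty
      rw [Finset.not_nonempty_iff_eq_empty] at hempty
      have hcardA : A.1.card = k := by
        by_contra h
        exact hne (by rw [hxbar, if_neg h, mul_zero])
      have h1 := Finset.card_union_add_card_inter R' A.1
      have h2 : (R' ∪ A.1).card ≤ k + 1 := by
        have := Finset.card_le_card (Finset.subset_univ (R' ∪ A.1))
        simpa using this
      rw [hempty] at h1
      simp only [Finset.card_empty, add_zero] at h1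
      omega
    rw [hfull]
    have hterm : ∀ A : GadgetComp k, (((R' ∩ A.1).card : ℝ) - 1) * gadgetXbar k A
        = if A.1.card = k then (((R' ∩ A.1).card : ℝ) - 1) * w else 0 := by
      intro A; rw [hxbar]; split <;> simp
    rw [Finset.sum_congr rfl (fun A _ => hterm A),
      gadget_sum_eq k hk (fun B => (((R' ∩ B).card : ℝ) - 1) * w)]
    have hint : ∀ i : Fin (k+1), R' ∩ (univ : Finset (Fin (k+1))).erase i = R'.erase i := by
      intro i; ext x
      simp only [Finset.mem_inter, Finset.mem_erase, Finset.mem_univ, and_true]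
      tauto
    have hcard : ∀ i : Fin (k+1),
        ((R'.erase i).card : ℝ) = r - (if i ∈ R' then 1 else 0) := by
      intro i
      by_cases h : i ∈ R'
      · rw [Finset.card_erase_of_mem h, if_pos h, Nat.cast_sub (by omega)]
        simp [hrdef]
      · rw [Finset.erase_eq_of_notMem h, if_neg h]; simp [hrdef]
    have hsumind : ∑ i : Fin (k+1), (if i ∈ R' then (1:ℝ) else 0) = r := by
      simp [hrdef]
    calc ∑ i : Fin (k+1), (((R' ∩ (univ : Finset (Fin (k+1))).erase i).card : ℝ) - 1) * w
        = ∑ i : Fin (k+1), ((r - 1) * w - (if i ∈ R' then (1:ℝ) else 0) * w) := by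
          refine Finset.sum_congr rfl fun i _ => ?_
          rw [hint i, hcard i]; ring
      _ = ((k : ℝ) + 1) * ((r - 1) * w) - r * w := by
          rw [Finset.sum_sub_distrib, Finset.sum_const, Finset.card_univ, ← Finset.sum_mul,
            hsumind]
          simp only [Fintype.card_fin, nsmul_eq_mul]
          push_cast
          ring
      _ ≤ r - 1 := by
          have hfold : ((k : ℝ) + 1) * ((r - 1) * w) - r * w
              = (((k : ℝ) + 1) * (r - 1) - r) * (k : ℝ) / ((k : ℝ) ^ 2 - 1) := by
            rw [hw]; ring
          rw [hfold, div_le_iff₀ hpos]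
          nlinarith
  refine ⟨⟨?_, hspan, hsub⟩, hspan, hobj⟩
  intro A
  rw [hxbar]
  split
  · exact ⟨hw0, hw1⟩
  · exact ⟨le_refl 0, zero_le_one⟩
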